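/- Fix β > 0, n ≥ 1, and real numbers a_1, …, a_n with a_i > 0 for every i, and define L(w) = (1/n) ∑_{i=1}^n −log σ(β w a_i) for w ∈ ℝ, where σ(z) = 1/(1 + exp(−z)). Then: (i) L(w) > 0 for every w ∈ ℝ; (ii) L(w) → 0 as w → +∞; and consequently (iii) the infimum of L over ℝ equals 0 and is not attained at any w ∈ ℝ. -/

import Mathlib

open Filter

/-- The logistic sigmoid `σ(z) = 1/(1 + exp(−z))`. -/
noncomputable def logisticSigma (z : ℝ) : ℝ := 1 / (1 + Real.exp (-z))

lemma neg_log_logisticSigma (z : ℝ) :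
    -Real.log (logisticSigma z) = Real.log (1 + Real.exp (-z)) := by
  unfold logisticSigma
  rw [Real.log_div one_ne_zero (by positivity), Real.log_one]
  ring

/-- For the empirical DPO loss restricted to the environment weight,
`L(w) = (1/n) ∑ᵢ −log σ(β w aᵢ)` with all `aᵢ > 0`: `L` is positive everywhere,
tends to `0` as `w → +∞`, and hence its infimum over `ℝ` is `0` and is not attained. -/
theorem dpo_env_loss_pos_tendsto_zero_infimum_not_attained
    (β : ℝ) (hβ : 0 < β) (n : ℕ) (hn : 1 ≤ n) (a : Fin n → ℝ) (ha : ∀ i, 0 < a i)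
    (L : ℝ → ℝ)
    (hL : L = fun w : ℝ => (1 / (n : ℝ)) * ∑ i, -Real.log (logisticSigma (β * w * a i))) :
    (∀ w : ℝ, 0 < L w) ∧
    Tendsto L atTop (nhds 0) ∧
    (IsGLB (Set.range L) 0 ∧ ∀ w : ℝ, L w ≠ 0) := by
  have hn0 : (0 : ℝ) < (n : ℝ) := by exact_mod_cast hn
  have hpos : ∀ w : ℝ, 0 < L w := by
    intro w
    rw [hL]
    simp only
    apply mul_pos (by positivity)
    have : Nonempty (Fin n) := Fin.pos_iff_nonempty.mp hn
    apply Finset.sum_pos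
    · intro i _
      rw [neg_log_logisticSigma]
      apply Real.log_pos
      have := Real.exp_pos (-(β * w * a i))
      linarith
    · exact Finset.univ_nonempty
  refine ⟨hpos, ?_, ?_⟩
  · have htend : Tendsto L atTop (nhds ((1 / (n : ℝ)) * ∑ i : Fin n, (0:ℝ))) := by
      rw [hL]
      apply Tendsto.const_mul
      apply tendsto_finset_sum
      intro i _
      have h1 : Tendsto (fun w : ℝ => β * w * a i) atTop atTop := by
        apply Tendsto.atTop_mul_const (ha i)
        exact (tendsto_id.const_mul_atTop hβ)
      have h2 : Tendsto (fun w : ℝ => 1 + Real.exp (-(β * w * a i))) atTop (nhds 1) := by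
        have := (Real.tendsto_exp_atBot).comp (tendsto_neg_atBot_iff.mpr h1)
        simpa using (tendsto_const_nhds.add this)
      have h3 : Tendsto (fun w : ℝ => Real.log (1 + Real.exp (-(β * w * a i))))
          atTop (nhds 0) := by
        have := (Real.continuousAt_log (by norm_num : (1:ℝ) ≠ 0)).tendsto.comp h2
        simpa [Function.comp_def] using this
      simpa only [neg_log_logisticSigma] using h3
    simpa using htend
  constructor
  · constructor
    · rintro x ⟨w, rfl⟩
      exact (hpos w).le
    · intro b hb
      have htend : Tendsto L atTop (nhds 0) := by
        -- reuse: prove again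
        have htend : Tendsto L atTop (nhds ((1 / (n : ℝ)) * ∑ i : Fin n, (0:ℝ))) := by
          rw [hL]
          apply Tendsto.const_mul
          apply tendsto_finset_sum
          intro i _
          have h1 : Tendsto (fun w : ℝ => β * w * a i) atTop atTop := by
            apply Tendsto.atTop_mul_const (ha i)
            exact (tendsto_id.const_mul_atTop hβ)
          have h2 : Tendsto (fun w : ℝ => 1 + Real.exp (-(β * w * a i))) atTop (nhds 1) := by
            have := (Real.tendsto_exp_atBot).comp (tendsto_neg_atBot_iff.mpr h1)
            simpa using (tendsto_const_nhds.add this)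
          have h3 : Tendsto (fun w : ℝ => Real.log (1 + Real.exp (-(β * w * a i))))
              atTop (nhds 0) := by
            have := (Real.continuousAt_log (by norm_num : (1:ℝ) ≠ 0)).tendsto.comp h2
            simpa [Function.comp_def] using this
          simpa only [neg_log_logisticSigma] using h3
        simpa using htend
      exact ge_of_tendsto' htend (fun w => hb ⟨w, rfl⟩)
  · intro w
    exact (hpos w).ne'
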